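/- arXiv:1811.05552 — 4 statements merged into one kernel-verified Lean document; each statement's English description precedes it below -/
import Mathlib

section
/- Let V be a finite-dimensional vector space over a field Λ, let a : V → V be a linear operator, and let c : V → ℝ ∪ {-∞} be a function with c(v) = -∞ iff v = 0. Let m ≥ 2, A > 0, and suppose that for every nonzero x ∈ V one has the telescoping identity: the sum over j = 0,...,m-1 of (c(aʲx) - c(aʲ⁺¹x)) equals m·A, where each summand c(aʲx) - c(aʲ⁺¹x) is nonnegative (here a⁰ = id). Suppose further that there exists a linear subspace W ⊆ V of dimension dim W > ((m-1)/m)·dim V such that c(w) - c(a(w)) > A for all nonzero w ∈ W. Then the subspace I = W ∩ a(W) ∩ ... ∩ a^{m-1}(W) is nonzero and any nonzero x ∈ I yields a contradiction; hence no such subspace W exists. -/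
open Module

private lemma inf_finrank_bound {Λ V : Type*} [Field Λ] [AddCommGroup V] [Module Λ V]
    [FiniteDimensional Λ V] (p : ℕ → Submodule Λ V) (d : ℕ)
    (hp : ∀ i, finrank Λ V ≤ finrank Λ (p i) + d) (s : Finset ℕ) :
    finrank Λ V ≤ finrank Λ ↥(s.inf p) + s.card * d := by
  classical
  induction s using Finset.induction_on with
  | empty => rw [Finset.inf_empty]; simp [finrank_top]
  | @insert i s hi ih =>
    rw [Finset.inf_insert, Finset.card_insert_of_notMem hi]
    have h1 := hp i
    have h2 := Submodule.finrank_sup_add_finrank_inf_eq (p i) (s.inf p)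
    have h3 : finrank Λ ↥(p i ⊔ s.inf p) ≤ finrank Λ V :=
      Submodule.finrank_le _
    have h4 : (s.card + 1) * d = s.card * d + d := by ring
    omega

/-- Pigeonhole lemma for filtration drops: if the telescoping sum
`∑_{j<m} (c(aʲx) - c(aʲ⁺¹x)) = m·A` with nonnegative summands for every nonzero `x`, then
there is no subspace `W` of dimension `> ((m-1)/m)·dim V` on which the drop
`c(w) - c(a w)` exceeds `A` for every nonzero `w`. -/
theorem no_large_subspace_with_big_drop
    {Λ V : Type*} [Field Λ] [AddCommGroup V] [Module Λ V] [FiniteDimensional Λ V]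
    (a : V →ₗ[Λ] V) (c : V → EReal)
    (hc0 : ∀ v : V, c v = ⊥ ↔ v = 0)
    (m : ℕ) (hm : 2 ≤ m) (A : ℝ) (hA : 0 < A)
    (hnonneg : ∀ x : V, x ≠ 0 → ∀ j : ℕ, j < m →
      (0 : EReal) ≤ c ((a ^ j) x) - c ((a ^ (j + 1)) x))
    (htel : ∀ x : V, x ≠ 0 →
      (∑ j ∈ Finset.range m, (c ((a ^ j) x) - c ((a ^ (j + 1)) x)))
        = (((m : ℝ) * A : ℝ) : EReal)) :
    ∀ W : Submodule Λ V,
      ((m - 1 : ℝ) / (m : ℝ)) * (Module.finrank Λ V) < (Module.finrank Λ W : ℝ) →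
      (∀ w ∈ W, w ≠ 0 → (A : EReal) < c w - c (a w)) → False := by
  intro W hdim hW
  classical
  set n := finrank Λ V with hn
  set w := finrank Λ W with hw
  -- convert the dimension hypothesis to ℕ
  have hmpos : (0 : ℝ) < (m : ℝ) := by positivity
  have hnat : (m - 1) * n < m * w := by
    have h1 : ((m : ℝ) - 1) * n < w * m := by
      have hd : ((m : ℝ) - 1) * n / m < w := by rwa [div_mul_eq_mul_div] at hdim
      exact (div_lt_iff₀ hmpos).mp hd
    have h2 : (((m - 1 : ℕ) : ℝ)) * n < (m : ℝ) * w := by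
      rw [Nat.cast_sub (by omega : 1 ≤ m), Nat.cast_one]; linarith
    exact_mod_cast h2
  -- the quotient dimension
  set q := finrank Λ (V ⧸ W) with hq
  have hqw : q + w = n := Submodule.finrank_quotient_add_finrank W
  -- each comap has small codimension
  have hcomap : ∀ i : ℕ, n ≤ finrank Λ (Submodule.comap (a ^ i) W) + q := by
    intro i
    have hker : Submodule.comap (a ^ i) W = LinearMap.ker (W.mkQ ∘ₗ (a ^ i)) := by
      ext x
      simp [LinearMap.mem_ker, Submodule.Quotient.mk_eq_zero]
    have h1 := LinearMap.finrank_range_add_finrank_ker (W.mkQ ∘ₗ (a ^ i))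
    have h2 : finrank Λ (LinearMap.range (W.mkQ ∘ₗ (a ^ i))) ≤ q :=
      (Submodule.finrank_le _).trans_eq rfl
    rw [hker]
    omega
  -- the intersection
  set I := (Finset.range m).inf (fun i => Submodule.comap (a ^ i) W) with hI
  have hIrank : n ≤ finrank Λ I + m * q := by
    have := inf_finrank_bound (fun i => Submodule.comap (a ^ i) W) q hcomap (Finset.range m)
    simpa using this
  have hmq : m * q < n := by
    have h1 : m * q + m * w = m * n := by rw [← Nat.mul_add, hqw]
    have h2 : (m - 1) * n + n = m * n := by
      have hm1 : m - 1 + 1 = m := by omega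
      calc (m - 1) * n + n = ((m - 1) + 1) * n := by ring
        _ = m * n := by rw [hm1]
    omega
  have hIpos : 0 < finrank Λ I := by omega
  have hIne : I ≠ ⊥ := by
    intro h
    rw [h, finrank_bot] at hIpos
    exact lt_irrefl _ hIpos
  obtain ⟨x, hxI, hx0⟩ := Submodule.exists_mem_ne_zero_of_ne_bot hIne
  have hxW : ∀ j, j < m → (a ^ j) x ∈ W := by
    intro j hj
    have := (Submodule.mem_finsetInf.mp hxI) j (Finset.mem_range.mpr hj)
    exact this
  -- a^j x ≠ 0 for j < m
  have hne : ∀ j, j < m → (a ^ j) x ≠ 0 := by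
    intro j hj h0
    have h1 := hnonneg x hx0 j hj
    have h2 : (a ^ (j + 1)) x = 0 := by
      rw [pow_succ' a j]
      simp [h0]
    rw [h0, h2, (hc0 0).mpr rfl, EReal.bot_sub] at h1
    simp at h1
  -- each term is > A
  have hbig : ∀ j, j < m → (A : EReal) < c ((a ^ j) x) - c ((a ^ (j + 1)) x) := by
    intro j hj
    have := hW ((a ^ j) x) (hxW j hj) (hne j hj)
    have heq : (a ^ (j + 1)) x = a ((a ^ j) x) := by rw [pow_succ' a j]; simp
    rw [heq]
    exact this
  -- each term ≤ sum = mA, so finite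
  have hsum := htel x hx0
  have hle : ∀ j ∈ Finset.range m, (0:EReal) ≤ c ((a ^ j) x) - c ((a ^ (j + 1)) x) := by
    intro j hj
    exact hnonneg x hx0 j (Finset.mem_range.mp hj)
  have hfin : ∀ j ∈ Finset.range m,
      c ((a ^ j) x) - c ((a ^ (j + 1)) x) ≠ ⊤ ∧ c ((a ^ j) x) - c ((a ^ (j + 1)) x) ≠ ⊥ := by
    intro j hj
    constructor
    · have h1 : c ((a ^ j) x) - c ((a ^ (j + 1)) x) ≤ (((m : ℝ) * A : ℝ) : EReal) := by
        rw [← hsum]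
        exact Finset.single_le_sum hle hj
      intro h
      rw [h] at h1
      exact EReal.coe_ne_top _ (top_le_iff.mp h1)
    · intro h
      have := hle j hj
      rw [h] at this
      simp at this
  -- lift to real
  set r : ℕ → ℝ := fun j => (c ((a ^ j) x) - c ((a ^ (j + 1)) x)).toReal with hr
  have hcoe : ∀ j ∈ Finset.range m, ((r j : ℝ) : EReal) = c ((a ^ j) x) - c ((a ^ (j + 1)) x) := by
    intro j hj
    exact EReal.coe_toReal (hfin j hj).1 (hfin j hj).2
  have hsum2 : ((∑ j ∈ Finset.range m, r j : ℝ) : EReal) = (((m : ℝ) * A : ℝ) : EReal) := by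
    have hc : ((∑ j ∈ Finset.range m, r j : ℝ) : EReal)
        = ∑ j ∈ Finset.range m, ((r j : ℝ) : EReal) :=
      map_sum (⟨⟨Real.toEReal, EReal.coe_zero⟩, EReal.coe_add⟩ : ℝ →+ EReal) r (Finset.range m)
    rw [hc, Finset.sum_congr rfl hcoe, hsum]
  have hsum3 : ∑ j ∈ Finset.range m, r j = (m : ℝ) * A := by exact_mod_cast hsum2
  have hbigr : ∀ j ∈ Finset.range m, A < r j := by
    intro j hj
    have := hbig j (Finset.mem_range.mp hj)
    rw [← hcoe j hj] at this
    exact_mod_cast this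
  have : (m : ℝ) * A < ∑ j ∈ Finset.range m, r j := by
    calc (m : ℝ) * A = ∑ _j ∈ Finset.range m, A := by
          rw [Finset.sum_const, Finset.card_range, nsmul_eq_mul]
      _ < ∑ j ∈ Finset.range m, r j :=
          Finset.sum_lt_sum_of_nonempty (by simp; omega) hbigr
  linarith [hsum3]
end

section
/- Let V be a B-dimensional vector space over a field Λ, a : V → V a linear operator, and c : V → ℝ ∪ {-∞} a function with c(v) = -∞ iff v = 0, such that c(x) - c(a(x)) ≥ 0 for all nonzero x and the sum over j = 0,...,m-1 of (c(aʲx) - c(aʲ⁺¹x)) equals a constant S for every nonzero x ∈ V (with a⁰ = id, m ≥ 2). Define the multiplication spectrum β₁ ≤ ... ≤ β_B as the values c(e) - c(a(e)) over a suitable orthogonal basis (or: as the spectral values of a with respect to c). Then at least ⌈B/m⌉ of these values are at most S/m. -/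
/-- A family `e` is *orthogonal* for a filtration function `c` and valuation `ν` if the
filtration of any linear combination is the maximum of the filtrations of the summands. -/
def IsOrthFamily {Λ V ι : Type*} [Field Λ] [AddCommGroup V] [Module Λ V] [Fintype ι]
    (ν : Λ → EReal) (c : V → EReal) (e : ι → V) : Prop :=
  ∀ lam : ι → Λ,
    c (∑ i, lam i • e i) = Finset.univ.sup fun i => c (e i) - ν (lam i)

/-- If the drops `c(x) - c(a x)` are nonnegative and telescope to a constant
`S` after `m` steps for every nonzero `x`, then for any orthogonal spectral-value basis
`e` of the `B`-dimensional space `V` (so that both `e` and `a ∘ e` are orthogonal, and the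
spectral values of `a` are the drops `c(eⱼ) - c(a eⱼ)`), at least `⌈B/m⌉` of the spectral
values are at most `S/m`. -/
theorem mult_spectrum_root_of_unity_bound
    {Λ V : Type*} [Field Λ] [AddCommGroup V] [Module Λ V]
    (ν : Λ → EReal)
    (hν_ne_bot : ∀ x : Λ, ν x ≠ ⊥)
    (hν_zero : ∀ x : Λ, ν x = ⊤ ↔ x = 0)
    (hν_mul : ∀ x y : Λ, ν (x * y) = ν x + ν y)
    (hν_add : ∀ x y : Λ, min (ν x) (ν y) ≤ ν (x + y))
    (B : ℕ) (hB : Module.finrank Λ V = B)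
    (a : V →ₗ[Λ] V) (c : V → EReal)
    (hc0 : ∀ v : V, c v = ⊥ ↔ v = 0)
    (m : ℕ) (hm : 2 ≤ m) (S : ℝ)
    (hnonneg : ∀ x : V, x ≠ 0 → (0 : EReal) ≤ c x - c (a x))
    (htel : ∀ x : V, x ≠ 0 →
      (∑ j ∈ Finset.range m, (c ((a ^ j) x) - c ((a ^ (j + 1)) x))) = (S : EReal))
    (e : Module.Basis (Fin B) Λ V)
    (he : IsOrthFamily ν c e)
    (hae : IsOrthFamily ν c fun j => a (e j)) :
    ⌈(B : ℝ) / (m : ℝ)⌉₊ ≤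
      Nat.card {j : Fin B | c (e j) - c (a (e j)) ≤ ((S / (m : ℝ) : ℝ) : EReal)} := by
  classical
  rcases Nat.eq_zero_or_pos B with hB0 | hBpos
  · subst hB0; simp
  have hm0 : 0 < m := by omega
  have hmR : (0 : ℝ) < (m : ℝ) := by exact_mod_cast hm0
  haveI : FiniteDimensional Λ V := Module.Finite.of_basis e
  -- `a` maps nonzero vectors to nonzero vectors
  have key_ne : ∀ x : V, x ≠ 0 → a x ≠ 0 := by
    intro x hx hax
    have hzero : ∀ j : ℕ, 1 ≤ j → (a ^ j) x = 0 := by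
      intro j hj
      obtain ⟨i, rfl⟩ : ∃ i, j = i + 1 := ⟨j - 1, by omega⟩
      rw [pow_succ, Module.End.mul_apply, hax, map_zero]
    have h1m : 1 ∈ Finset.range m := by simp; omega
    have hsum := htel x hx
    rw [← Finset.add_sum_erase _ _ h1m] at hsum
    rw [(hc0 _).mpr (hzero 1 le_rfl), EReal.bot_sub, EReal.bot_add] at hsum
    exact (EReal.coe_ne_bot S) hsum.symm
  have hainj : Function.Injective a := by
    refine (injective_iff_map_eq_zero (a : V →ₗ[Λ] V)).mpr ?_
    intro x hx
    by_contra hx0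
    exact key_ne x hx0 hx
  have hpow_ne : ∀ (j : ℕ) (x : V), x ≠ 0 → (a ^ j) x ≠ 0 := by
    intro j
    induction j with
    | zero => intro x hx; simpa using hx
    | succ n ih =>
      intro x hx
      rw [pow_succ, Module.End.mul_apply]
      exact ih (a x) (key_ne x hx)
  -- terms of the telescoping sum are nonnegative
  have hterm_nonneg : ∀ (x : V), x ≠ 0 → ∀ j : ℕ,
      (0 : EReal) ≤ c ((a ^ j) x) - c ((a ^ (j + 1)) x) := by
    intro x hx j
    have h := hnonneg ((a ^ j) x) (hpow_ne j x hx)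
    have : a ((a ^ j) x) = (a ^ (j + 1)) x := by
      rw [pow_succ', Module.End.mul_apply]
    rwa [this] at h
  -- terms are at most S
  have hterm_le : ∀ (x : V), x ≠ 0 → ∀ j ∈ Finset.range m,
      c ((a ^ j) x) - c ((a ^ (j + 1)) x) ≤ (S : EReal) := by
    intro x hx j hj
    have := Finset.single_le_sum
      (f := fun j => c ((a ^ j) x) - c ((a ^ (j + 1)) x))
      (fun i _ => hterm_nonneg x hx i) hj
    rwa [htel x hx] at this
  -- c takes real values on nonzero vectors
  have hcreal : ∀ y : V, y ≠ 0 → ∃ r : ℝ, c y = (r : EReal) := by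
    intro y hy
    have hbot : c y ≠ ⊥ := fun h => hy ((hc0 y).mp h)
    have htop : c y ≠ ⊤ := by
      intro htop
      have hay : a y ≠ 0 := key_ne y hy
      have haybot : c (a y) ≠ ⊥ := fun h => hay ((hc0 _).mp h)
      rcases eq_or_ne (c (a y)) ⊤ with hT | hT
      · have h0 := hnonneg y hy
        rw [htop, hT, EReal.sub_top] at h0
        exact absurd h0 (by simp)
      · have h0m : (0 : ℕ) ∈ Finset.range m := by simp; omega
        have hle := hterm_le y hy 0 h0m
        simp only [pow_zero, zero_add, pow_one, Module.End.one_apply] at hle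
        obtain ⟨q, hq⟩ : ∃ q : ℝ, c (a y) = (q : EReal) :=
          ⟨(c (a y)).toReal, (EReal.coe_toReal hT haybot).symm⟩
        rw [htop, hq, EReal.top_sub_coe] at hle
        exact absurd hle (by simp)
    exact ⟨(c y).toReal, (EReal.coe_toReal htop hbot).symm⟩
  -- key lower bound for the drop of a general nonzero vector
  have keyD : ∀ x : V, x ≠ 0 → ∃ j : Fin B, e.repr x j ≠ 0 ∧
      c (e j) - c (a (e j)) ≤ c x - c (a x) := by
    intro x hx
    set lam : Fin B → Λ := fun i => e.repr x i with hlam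
    have hxe : ∑ i, lam i • e i = x := e.sum_repr x
    have hcx : c x = Finset.univ.sup fun i => c (e i) - ν (lam i) := by
      conv_lhs => rw [← hxe]
      exact he lam
    have haxe : a x = ∑ i, lam i • a (e i) := by
      conv_lhs => rw [← hxe]
      simp [map_sum, map_smul]
    have hcax : c (a x) = Finset.univ.sup fun i => c (a (e i)) - ν (lam i) := by
      rw [haxe]; exact hae lam
    obtain ⟨j, -, hj⟩ := Finset.exists_mem_eq_sup (Finset.univ : Finset (Fin B))
      ⟨⟨0, hBpos⟩, Finset.mem_univ _⟩ (fun i => c (a (e i)) - ν (lam i))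
    have hax_ne : a x ≠ 0 := key_ne x hx
    have hcax_ne_bot : c (a x) ≠ ⊥ := fun h => hax_ne ((hc0 _).mp h)
    have hlamj : lam j ≠ 0 := by
      intro h0
      have : ν (lam j) = ⊤ := (hν_zero _).mpr h0
      rw [hcax, hj, this, EReal.sub_top] at hcax_ne_bot
      exact hcax_ne_bot rfl
    refine ⟨j, hlamj, ?_⟩
    obtain ⟨r, hr⟩ : ∃ r : ℝ, ν (lam j) = (r : EReal) :=
      ⟨(ν (lam j)).toReal,
        (EReal.coe_toReal (fun h => hlamj ((hν_zero _).mp h)) (hν_ne_bot _)).symm⟩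
    obtain ⟨p, hp⟩ := hcreal (e j) (e.ne_zero j)
    obtain ⟨q, hq⟩ := hcreal (a (e j)) (key_ne _ (e.ne_zero j))
    obtain ⟨u, hu⟩ := hcreal x hx
    obtain ⟨v, hv⟩ := hcreal (a x) hax_ne
    have hveq : v = q - r := by
      have : (v : EReal) = ((q - r : ℝ) : EReal) := by
        rw [← hv, hcax, hj, hq, hr, EReal.coe_sub]
      exact_mod_cast this
    have hule : p - r ≤ u := by
      have h1 : ((fun i => c (e i) - ν (lam i)) j) ≤ c x := by
        rw [hcx]
        exact Finset.le_sup (f := fun i => c (e i) - ν (lam i)) (Finset.mem_univ j)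
      have : ((p - r : ℝ) : EReal) ≤ (u : EReal) := by
        rw [EReal.coe_sub, ← hp, ← hr, ← hu]; exact h1
      exact_mod_cast this
    rw [hp, hq, hu, hv, ← EReal.coe_sub, ← EReal.coe_sub, EReal.coe_le_coe_iff]
    linarith [hveq, hule]
  -- the "small drop" set and the "big drop" span
  set P : Fin B → Prop := fun j => c (e j) - c (a (e j)) ≤ ((S / (m : ℝ) : ℝ) : EReal) with hP
  set sm : Finset (Fin B) := Finset.univ.filter P with hsm
  set bg : Finset (Fin B) := Finset.univ.filter (fun j => ¬ P j) with hbg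
  set U : Submodule Λ V := Submodule.span Λ (e '' ↑bg) with hUdef
  have hU : ∀ x ∈ U, x ≠ 0 → ((S / (m : ℝ) : ℝ) : EReal) < c x - c (a x) := by
    intro x hxU hx
    obtain ⟨j, hj0, hjle⟩ := keyD x hx
    have hsupp : ↑(e.repr x).support ⊆ (↑bg : Set (Fin B)) :=
      (Module.Basis.mem_span_image e).mp hxU
    have hjbg : j ∈ bg := hsupp (by simpa [Finsupp.mem_support_iff] using hj0)
    have hnP : ¬ P j := (Finset.mem_filter.mp hjbg).2
    exact lt_of_lt_of_le (not_le.mp hnP) hjle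
  -- the intersection of preimages of U under powers of a is trivial
  set W : ℕ → Submodule Λ V := fun j => Submodule.comap (a ^ j) U with hW
  have hWbot : (Finset.range m).inf W = ⊥ := by
    rw [eq_bot_iff]
    intro x hx
    rw [Submodule.mem_bot]
    by_contra hx0
    have hmem : ∀ j ∈ Finset.range m, (a ^ j) x ∈ U := by
      intro j hj
      exact Submodule.mem_finsetInf.mp hx j hj
    have hterm : ∀ j ∈ Finset.range m,
        ((S / (m : ℝ) : ℝ) : EReal) < c ((a ^ j) x) - c ((a ^ (j + 1)) x) := by
      intro j hj
      have h := hU ((a ^ j) x) (hmem j hj) (hpow_ne j x hx0)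
      have heq : a ((a ^ j) x) = (a ^ (j + 1)) x := by
        rw [pow_succ', Module.End.mul_apply]
      rwa [heq] at h
    set t : ℕ → ℝ := fun j => (c ((a ^ j) x) - c ((a ^ (j + 1)) x)).toReal with ht
    have hco : ∀ j ∈ Finset.range m,
        ((t j : ℝ) : EReal) = c ((a ^ j) x) - c ((a ^ (j + 1)) x) := by
      intro j hj
      refine EReal.coe_toReal ?_ ?_
      · intro hT
        have := hterm_le x hx0 j hj
        rw [hT] at this
        exact absurd this (by simp)
      · intro hbot
        have := hterm j hj
        rw [hbot] at this
        exact absurd this (by simp)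
    have hsum : ∑ j ∈ Finset.range m, t j = S := by
      have h1 : ((∑ j ∈ Finset.range m, t j : ℝ) : EReal)
          = ∑ j ∈ Finset.range m, ((t j : ℝ) : EReal) :=
        map_sum (⟨⟨Real.toEReal, EReal.coe_zero⟩, EReal.coe_add⟩ : ℝ →+ EReal) t _
      have h2 : ((∑ j ∈ Finset.range m, t j : ℝ) : EReal) = (S : EReal) := by
        rw [h1, Finset.sum_congr rfl hco, htel x hx0]
      exact_mod_cast h2
    have hgt : ∀ j ∈ Finset.range m, S / (m : ℝ) < t j := by
      intro j hj
      have := hterm j hj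
      rw [← hco j hj] at this
      exact_mod_cast this
    have hlt : (m : ℝ) * (S / (m : ℝ)) < ∑ j ∈ Finset.range m, t j := by
      have := Finset.sum_lt_sum_of_nonempty
        (s := Finset.range m) (f := fun _ => S / (m : ℝ)) (g := t)
        ⟨0, by simp; omega⟩ hgt
      simpa [Finset.sum_const, Finset.card_range, nsmul_eq_mul] using this
    rw [hsum] at hlt
    have : (m : ℝ) * (S / (m : ℝ)) = S := by field_simp
    rw [this] at hlt
    exact lt_irrefl _ hlt
  -- dimension of U
  have hdimU : Module.finrank Λ U + sm.card = B := by
    have hli : LinearIndependent Λ (fun i : (↑bg : Set (Fin B)) => e ↑i) :=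
      e.linearIndependent.comp _ Subtype.val_injective
    have h1 : Module.finrank Λ U = bg.card := by
      rw [hUdef, Set.image_eq_range, finrank_span_eq_card hli]
      simp
    have h2 : sm.card + bg.card = B := by
      have := Finset.card_filter_add_card_filter_not
        (s := (Finset.univ : Finset (Fin B))) (p := P)
      simpa [← hsm, ← hbg, Finset.card_univ] using this
    omega
  -- each W j has the same dimension as U
  have hdimW : ∀ j : ℕ, Module.finrank Λ (W j) = Module.finrank Λ U := by
    intro j
    have hinj : Function.Injective (a ^ j : V →ₗ[Λ] V) := by
      refine (injective_iff_map_eq_zero ((a ^ j : V →ₗ[Λ] V))).mpr ?_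
      intro x hx
      by_contra hx0
      exact hpow_ne j x hx0 hx
    set eqv : V ≃ₗ[Λ] V := LinearEquiv.ofBijective (a ^ j)
      ⟨hinj, LinearMap.injective_iff_surjective.mp hinj⟩ with heqv
    have hcoe : (eqv : V →ₗ[Λ] V) = (a ^ j : V →ₗ[Λ] V) := rfl
    have heq : W j = Submodule.map (eqv.symm : V →ₗ[Λ] V) U := by
      show Submodule.comap (a ^ j) U = _
      rw [← Submodule.comap_equiv_eq_map_symm, hcoe]
    rw [heq, LinearEquiv.finrank_map_eq]
  -- induction: dimension count
  have hstep : ∀ p q : Submodule Λ V, Module.finrank Λ q + sm.card = B →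
      Module.finrank Λ p ≤ Module.finrank Λ ↥(p ⊓ q) + sm.card := by
    intro p q hq
    have h1 := Submodule.finrank_sup_add_finrank_inf_eq p q
    have h2 : Module.finrank Λ ↥(p ⊔ q : Submodule Λ V) ≤ B := hB ▸ Submodule.finrank_le _
    omega
  have hind : ∀ n : ℕ, 1 ≤ n →
      B ≤ Module.finrank Λ ↥((Finset.range n).inf W) + n * sm.card := by
    intro n
    induction n with
    | zero => omega
    | succ n ih =>
      intro _
      rcases Nat.eq_zero_or_pos n with rfl | hn
      · have h0 : (Finset.range (0 + 1)).inf W = W 0 := by simp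
        have hW0 : W 0 = U := by
          show Submodule.comap (a ^ 0) U = U
          rw [pow_zero, Module.End.one_eq_id]
          exact Submodule.comap_id U
        rw [h0, hW0]
        omega
      · have h1 := ih hn
        have hins : (Finset.range (n + 1)).inf W = ((Finset.range n).inf W) ⊓ W n := by
          rw [Finset.range_add_one, Finset.inf_insert, inf_comm]
        have h2 : Module.finrank Λ (W n) + sm.card = B := by rw [hdimW n]; exact hdimU
        have h3 := hstep ((Finset.range n).inf W) (W n) h2
        rw [hins]
        calc B ≤ Module.finrank Λ ↥((Finset.range n).inf W) + n * sm.card := h1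
          _ ≤ Module.finrank Λ ↥(((Finset.range n).inf W) ⊓ W n) + sm.card + n * sm.card := by
              omega
          _ = Module.finrank Λ ↥(((Finset.range n).inf W) ⊓ W n) + (n + 1) * sm.card := by ring
  have hfinal : B ≤ m * sm.card := by
    have := hind m (by omega)
    rw [hWbot] at this
    simpa [finrank_bot] using this
  -- conclude
  have hcard : Nat.card {j : Fin B | c (e j) - c (a (e j)) ≤ ((S / (m : ℝ) : ℝ) : EReal)}
      = sm.card := by
    rw [Nat.card_coe_set_eq, Set.ncard_eq_toFinset_card', hsm]
    congr 1
    ext j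
    simp [hP]
  rw [hcard]
  rw [Nat.ceil_le]
  rw [div_le_iff₀ hmR]
  have : (B : ℝ) ≤ (m : ℝ) * (sm.card : ℝ) := by exact_mod_cast hfinal
  linarith
end

section
/- Let B ∈ ℤ≥0, let ℬ_ℤ be a multiset of intervals (bars) in ℝ indexed over ℤ-graded pieces, invariant under a free ℤ-action which shifts bars: the action of 1 ∈ ℤ sends a bar (a, b) to (a - A, b - A) for a fixed constant A > 0 (and shifts the grading by a fixed amount). Let ℬ₋ be the sub-multiset of bars whose lower endpoint lies in [0, A), ℬ₊ the sub-multiset of bars whose upper endpoint lies in [0, A). Suppose ℬ₊ consists entirely of finite bars. Then the number of endpoints of ℬ₋ (counting each infinite bar once and each finite bar twice) equals the number X of endpoints of ℬ_ℤ lying in [0, A). Concretely: X⁺(ℬ₋) + X⁻(ℬ₋) = X⁻(ℬ₊) + X⁻(ℬ₋), which reduces to X⁺(ℬ₋ \ ℬ₊) = X⁻(ℬ₊ \ ℬ₋), both sides being in bijection with the ℤ-quotient of the invariant sub-multiset of finite bars of length at least A. -/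
section Aux

variable {ι : Type*} (T : Equiv.Perm ι) (lo : ι → ℝ) (hi : ι → WithTop ℝ) (A : ℝ)

lemma lo_zpow (hTlo : ∀ i, lo (T i) = lo i - A) :
    ∀ (m : ℤ) (i : ι), lo ((T ^ m) i) = lo i - m * A := by
  intro m
  induction m using Int.induction_on with
  | zero => simp
  | succ n ih =>
      intro i
      have h1 : (T ^ ((n : ℤ) + 1)) i = (T ^ (n : ℤ)) (T i) := by
        rw [zpow_add_one, Equiv.Perm.mul_apply]
      rw [h1, ih, hTlo]; push_cast; ring
  | pred n ih =>
      intro i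
      have h1 : T ((T ^ (-(n : ℤ) - 1)) i) = (T ^ (-(n : ℤ))) i := by
        rw [← Equiv.Perm.mul_apply, ← zpow_one_add]
        norm_num
      have h2 := hTlo ((T ^ (-(n : ℤ) - 1)) i)
      rw [h1, ih i] at h2
      push_cast at h2 ⊢
      linarith

lemma hi_zpow (hThi : ∀ i, hi (T i) = (hi i).map (fun x => x - A)) :
    ∀ (m : ℤ) (i : ι), hi ((T ^ m) i) = (hi i).map (fun x => x - m * A) := by
  intro m
  induction m using Int.induction_on with
  | zero =>
      intro i
      cases hhi : hi i <;> simp [hhi]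
  | succ n ih =>
      intro i
      have h1 : (T ^ ((n : ℤ) + 1)) i = (T ^ (n : ℤ)) (T i) := by
        rw [zpow_add_one, Equiv.Perm.mul_apply]
      rw [h1, ih, hThi]
      cases hhi : hi i with
      | top => simp
      | coe b =>
          rw [WithTop.map_coe, WithTop.map_coe, WithTop.map_coe]
          rw [WithTop.coe_inj]
          push_cast; ring
  | pred n ih =>
      intro i
      have h1 : T ((T ^ (-(n : ℤ) - 1)) i) = (T ^ (-(n : ℤ))) i := by
        rw [← Equiv.Perm.mul_apply, ← zpow_one_add]
        norm_num
      have h2 := hThi ((T ^ (-(n : ℤ) - 1)) i)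
      rw [h1, ih i] at h2
      cases hhi : hi i with
      | top =>
          rw [hhi, WithTop.map_top] at h2
          rw [WithTop.map_top]
          cases h3 : hi ((T ^ (-(n : ℤ) - 1)) i) with
          | top => rfl
          | coe b =>
              rw [h3, WithTop.map_coe] at h2
              exact (WithTop.coe_ne_top h2.symm).elim
      | coe c =>
          rw [hhi, WithTop.map_coe] at h2
          rw [WithTop.map_coe]
          cases h3 : hi ((T ^ (-(n : ℤ) - 1)) i) with
          | top =>
              rw [h3, WithTop.map_top] at h2
              exact (WithTop.coe_ne_top h2).elim
          | coe b =>
              rw [h3, WithTop.map_coe] at h2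
              rw [WithTop.coe_inj]
              have hb : c - ((-(n : ℤ) : ℤ) : ℝ) * A = b - A := by exact_mod_cast h2
              push_cast at hb ⊢
              linarith

end Aux

section Main

variable {A : ℝ}

lemma floor_sub_int_mul (hA : 0 < A) (x : ℝ) (m : ℤ) :
    ⌊(x - m * A) / A⌋ = ⌊x / A⌋ - m := by
  have : (x - m * A) / A = x / A - m := by field_simp
  rw [this, Int.floor_sub_intCast]

lemma floor_zero_of_Ico (hA : 0 < A) {x : ℝ} (hx : x ∈ Set.Ico (0 : ℝ) A) :
    ⌊x / A⌋ = 0 := by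
  rw [Int.floor_eq_zero_iff]
  constructor
  · exact div_nonneg hx.1 hA.le
  · rw [div_lt_one hA]; exact hx.2

lemma fract_mem_Ico (hA : 0 < A) (x : ℝ) :
    x - ⌊x / A⌋ * A ∈ Set.Ico (0 : ℝ) A :=
  ⟨Int.sub_floor_div_mul_nonneg x hA, Int.sub_floor_div_mul_lt x hA⟩

end Main



/-- Barcode with a free `ℤ`-action shifting bars down by `A > 0`:
bars are indexed by `ι`, with lower endpoints `lo : ι → ℝ` and upper endpoints
`hi : ι → ℝ ∪ {+∞}`, and the generator `T` of the action satisfies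
`lo (T i) = lo i - A`, `hi (T i) = hi i - A`. Let `ℬ₋` be the bars with lower endpoint in
`[0, A)` and `ℬ₊` those with (finite) upper endpoint in `[0, A)`. Then the total number of
endpoints of `ℬ₋` (all lower endpoints, plus the finite upper endpoints) equals the number
`X` of endpoints of the whole barcode lying in `[0, A)`, that is
`X⁻(ℬ₋) + X⁺(ℬ₋) = X⁻(ℬ₋) + X⁻(ℬ₊)`. -/
theorem barcode_endpoint_count_with_free_shift_action
    {ι : Type*} (T : Equiv.Perm ι)
    (lo : ι → ℝ) (hi : ι → WithTop ℝ)
    (hbar : ∀ i, (lo i : WithTop ℝ) < hi i)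
    (A : ℝ) (hA : 0 < A)
    (hTlo : ∀ i, lo (T i) = lo i - A)
    (hThi : ∀ i, hi (T i) = (hi i).map (fun x => x - A))
    (hfree : ∀ (m : ℤ) (i : ι), (T ^ m) i = i → m = 0)
    (hfin₁ : {i : ι | lo i ∈ Set.Ico (0 : ℝ) A}.Finite)
    (hfin₂ : {i : ι | ∃ b : ℝ, hi i = (b : WithTop ℝ) ∧ b ∈ Set.Ico (0 : ℝ) A}.Finite) :
    Nat.card {i : ι | lo i ∈ Set.Ico (0 : ℝ) A}
        + Nat.card {i : ι | lo i ∈ Set.Ico (0 : ℝ) A ∧ hi i ≠ ⊤}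
      = Nat.card {i : ι | lo i ∈ Set.Ico (0 : ℝ) A}
        + Nat.card {i : ι | ∃ b : ℝ, hi i = (b : WithTop ℝ) ∧ b ∈ Set.Ico (0 : ℝ) A} := by
  have hlz := lo_zpow T lo A hTlo
  have hhz := hi_zpow T hi A hThi
  have cancel : ∀ (m : ℤ) (i : ι), (T ^ (-m)) ((T ^ m) i) = i := by
    intro m i
    rw [← Equiv.Perm.mul_apply, ← zpow_add]
    simp
  congr 1
  apply Nat.card_congr
  refine
    { toFun := fun p => by
        refine ⟨(T ^ ⌊((hi p.1).untop p.2.2) / A⌋) p.1, ?_⟩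
        set b := (hi p.1).untop p.2.2 with hb
        have hcb : hi p.1 = (b : WithTop ℝ) := (WithTop.coe_untop _ _).symm
        refine ⟨b - ⌊b / A⌋ * A, ?_, fract_mem_Ico hA b⟩
        rw [hhz, hcb, WithTop.map_coe]
      invFun := fun p => by
        refine ⟨(T ^ ⌊lo p.1 / A⌋) p.1, ?_⟩
        obtain ⟨b, hb, hbI⟩ := p.2
        constructor
        · rw [hlz]; exact fract_mem_Ico hA _
        · rw [hhz, hb, WithTop.map_coe]; exact WithTop.coe_ne_top
      left_inv := ?_
      right_inv := ?_ }
  · rintro ⟨i, hIco, hne⟩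
    apply Subtype.ext
    simp only
    set b := (hi i).untop hne with hb
    set m := ⌊b / A⌋ with hm
    have h1 : lo ((T ^ m) i) = lo i - m * A := hlz m i
    have h2 : ⌊lo ((T ^ m) i) / A⌋ = -m := by
      rw [h1, floor_sub_int_mul hA, floor_zero_of_Ico hA hIco, zero_sub]
    rw [h2]
    exact cancel m i
  · rintro ⟨j, b, hbj, hbI⟩
    apply Subtype.ext
    simp only
    set m := ⌊lo j / A⌋ with hm
    have h1 : hi ((T ^ m) j) = ((b - m * A : ℝ) : WithTop ℝ) := by
      rw [hhz, hbj, WithTop.map_coe]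
    have h2 : ∀ (h : hi ((T ^ m) j) ≠ ⊤), (hi ((T ^ m) j)).untop h = b - m * A := by
      intro h
      have h5 : (((hi ((T ^ m) j)).untop h : ℝ) : WithTop ℝ)
          = ((b - m * A : ℝ) : WithTop ℝ) := (WithTop.coe_untop _ h).trans h1
      exact_mod_cast h5
    simp only [← hm, h2]
    have h3 : ⌊(b - m * A) / A⌋ = -m := by
      rw [floor_sub_int_mul hA, floor_zero_of_Ico hA hbI, zero_sub]
    rw [h3]
    exact cancel m j
end

section
/- Let G be a topological group, and define x, y ∈ G to be weakly conjugate if θ(x) = θ(y) for every continuous conjugation-invariant map θ : G → Y into any Hausdorff topological space Y. Then weak conjugacy is an equivalence relation, and if there exist h₀, ..., h_N ∈ G with h₀ = x, h_N = y, and the closures of consecutive conjugacy classes intersect (cl(Conj(h_j)) ∩ cl(Conj(h_{j+1})) ≠ ∅ for all j), then x and y are weakly conjugate. In particular, if y ∈ cl(Conj(x)) then x and y are weakly conjugate. -/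
/-- Two elements of a topological group are *weakly conjugate* if they are not separated
by any continuous conjugation-invariant map to a Hausdorff topological space. -/
def WeaklyConjugate {G : Type*} [Group G] [TopologicalSpace G] (x y : G) : Prop :=
  ∀ (Y : Type) [TopologicalSpace Y] [T2Space Y] (θ : G → Y),
    Continuous θ → (∀ g h : G, θ (h * g * h⁻¹) = θ g) → θ x = θ y

/-- The conjugacy class of an element of a group. -/
def conjClass {G : Type*} [Group G] (g : G) : Set G := {x : G | ∃ h : G, x = h * g * h⁻¹}

lemma theta_const_on_closure {G : Type*} [Group G] [TopologicalSpace G]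
    {Y : Type} [TopologicalSpace Y] [T2Space Y] {θ : G → Y}
    (hc : Continuous θ) (hinv : ∀ g h : G, θ (h * g * h⁻¹) = θ g)
    {g z : G} (hz : z ∈ closure (conjClass g)) : θ z = θ g := by
  have hsub : closure (conjClass g) ⊆ θ ⁻¹' {θ g} := by
    apply closure_minimal
    · rintro w ⟨h, rfl⟩
      exact hinv g h
    · exact IsClosed.preimage hc isClosed_singleton
  exact hsub hz

lemma weak_of_inter {G : Type*} [Group G] [TopologicalSpace G] (a b : G)
    (hne : (closure (conjClass a) ∩ closure (conjClass b)).Nonempty) :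
    WeaklyConjugate a b := by
  intro Y _ _ θ hc hinv
  obtain ⟨z, hza, hzb⟩ := hne
  rw [← theta_const_on_closure hc hinv hza, theta_const_on_closure hc hinv hzb]

/-- Weak conjugacy is an equivalence relation; if `x` and `y` are joined
by a finite chain `h₀ = x, …, h_N = y` whose consecutive conjugacy-class closures
intersect, then `x` and `y` are weakly conjugate; in particular this holds whenever
`y ∈ cl(Conj(x))`. -/
theorem weak_conjugacy_properties {G : Type*} [Group G] [TopologicalSpace G]
    [IsTopologicalGroup G] :
    Equivalence (WeaklyConjugate (G := G)) ∧
    (∀ (x y : G) (N : ℕ) (h : Fin (N + 1) → G),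
      h 0 = x → h (Fin.last N) = y →
      (∀ j : Fin N,
        (closure (conjClass (h j.castSucc)) ∩ closure (conjClass (h j.succ))).Nonempty) →
      WeaklyConjugate x y) ∧
    (∀ x y : G, y ∈ closure (conjClass x) → WeaklyConjugate x y) := by
  have htrans : ∀ a b c : G, WeaklyConjugate a b → WeaklyConjugate b c →
      WeaklyConjugate a c := by
    intro a b c hab hbc Y _ _ θ hc hinv
    exact (hab Y θ hc hinv).trans (hbc Y θ hc hinv)
  refine ⟨⟨fun a Y _ _ θ _ _ => rfl,
    fun {a b} hab Y _ _ θ hc hinv => (hab Y θ hc hinv).symm,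
    fun {a b c} hab hbc => htrans a b c hab hbc⟩, ?_, ?_⟩
  · intro x y N h h0 hN hchain
    subst h0; subst hN
    have key : ∀ k : Fin (N + 1), WeaklyConjugate (h 0) (h k) := by
      intro k
      induction k using Fin.induction with
      | zero => intro Y _ _ θ _ _; rfl
      | succ j ih =>
        exact htrans _ _ _ ih (weak_of_inter _ _ (hchain j))
    exact key (Fin.last N)
  · intro x y hy
    apply weak_of_inter
    exact ⟨y, hy, subset_closure ⟨1, by simp⟩⟩
end
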